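/- Let B ≤ C be L-algebras with B a substructure of C, and suppose B and C are universally equivalent (satisfy the same universal L-sentences). If a set T = S ∪ {¬(t₁=s₁),...,¬(tₘ=sₘ)} of quantifier-free formulas in finitely many variables is finitely satisfiable in C but not realized in C, then T is finitely satisfiable in B but not realized in B. -/

import Mathlib

open FirstOrder Language

namespace Stmt17Aux

variable {L : FirstOrder.Language} {n : ℕ}

/-- Equation formula `p.1 = p.2` as a bounded formula. -/
def eqForm (p : L.Term (Fin n) × L.Term (Fin n)) : L.BoundedFormula Empty n :=
  Term.bdEqual (p.1.relabel Sum.inr) (p.2.relabel Sum.inr)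

theorem eqForm_isQF (p : L.Term (Fin n) × L.Term (Fin n)) : (eqForm p).IsQF :=
  BoundedFormula.IsQF.of_isAtomic (BoundedFormula.IsAtomic.equal _ _)

theorem realize_eqForm {M : Type*} [L.Structure M] (p : L.Term (Fin n) × L.Term (Fin n))
    (v : Empty → M) (x : Fin n → M) :
    (eqForm p).Realize v x ↔ p.1.realize x = p.2.realize x := by
  simp only [eqForm, BoundedFormula.realize_bdEqual, Term.realize_relabel]
  have : Sum.elim v x ∘ Sum.inr = x := rfl
  rw [this]

/-- Conjunction of equations from a list. -/
def conjList : List (L.Term (Fin n) × L.Term (Fin n)) → L.BoundedFormula Empty n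
  | [] => ⊤
  | p :: l => eqForm p ⊓ conjList l

theorem conjList_isQF : ∀ l : List (L.Term (Fin n) × L.Term (Fin n)), (conjList l).IsQF
  | [] => BoundedFormula.IsQF.falsum.not
  | p :: l => ((eqForm_isQF p).inf (conjList_isQF l))

theorem realize_conjList {M : Type*} [L.Structure M]
    (v : Empty → M) (x : Fin n → M) :
    ∀ l : List (L.Term (Fin n) × L.Term (Fin n)),
      (conjList l).Realize v x ↔ ∀ p ∈ l, p.1.realize x = p.2.realize x
  | [] => by simp [conjList]
  | p :: l => by
    simp [conjList, realize_eqForm, realize_conjList v x l]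

/-- Conjunction of negated equations from a list. -/
def neqList : List (L.Term (Fin n) × L.Term (Fin n)) → L.BoundedFormula Empty n
  | [] => ⊤
  | p :: l => (eqForm p).not ⊓ neqList l

theorem neqList_isQF : ∀ l : List (L.Term (Fin n) × L.Term (Fin n)), (neqList l).IsQF
  | [] => BoundedFormula.IsQF.falsum.not
  | p :: l => ((eqForm_isQF p).not.inf (neqList_isQF l))

theorem realize_neqList {M : Type*} [L.Structure M]
    (v : Empty → M) (x : Fin n → M) :
    ∀ l : List (L.Term (Fin n) × L.Term (Fin n)),
      (neqList l).Realize v x ↔ ∀ p ∈ l, p.1.realize x ≠ p.2.realize x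
  | [] => by simp [neqList]
  | p :: l => by
    simp [neqList, realize_eqForm, realize_neqList v x l]

end Stmt17Aux

open Stmt17Aux

/-- Let `B ≤ C` be universally equivalent `L`-algebras with `B` a substructure of `C`. If
`T = S ∪ {¬(t₁=s₁),...,¬(tₘ=sₘ)}` is finitely satisfiable in `C` but not realized in
`C`, then `T` is finitely satisfiable in `B` but not realized in `B`. -/
theorem stmt17 (L : FirstOrder.Language) (C : Type*) [L.Structure C]
    (B : L.Substructure C)
    (huniv : ∀ (k : ℕ) (ψ : L.BoundedFormula Empty k), ψ.IsQF →
      (((B : Type _) ⊨ ψ.alls) ↔ (C ⊨ ψ.alls)))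
    {n m : ℕ} (S : Set (L.Term (Fin n) × L.Term (Fin n)))
    (t s : Fin m → L.Term (Fin n))
    (hfsC : ∀ S₀ : Finset (L.Term (Fin n) × L.Term (Fin n)), ↑S₀ ⊆ S →
      ∃ x : Fin n → C, (∀ p ∈ S₀, p.1.realize x = p.2.realize x) ∧
        ∀ i, (t i).realize x ≠ (s i).realize x)
    (hnrC : ¬∃ x : Fin n → C, (∀ p ∈ S, p.1.realize x = p.2.realize x) ∧
      ∀ i, (t i).realize x ≠ (s i).realize x) :
    (∀ S₀ : Finset (L.Term (Fin n) × L.Term (Fin n)), ↑S₀ ⊆ S →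
      ∃ x : Fin n → B, (∀ p ∈ S₀, p.1.realize x = p.2.realize x) ∧
        ∀ i, (t i).realize x ≠ (s i).realize x) ∧
      ¬∃ x : Fin n → B, (∀ p ∈ S, p.1.realize x = p.2.realize x) ∧
        ∀ i, (t i).realize x ≠ (s i).realize x := by
  constructor
  · intro S₀ hS₀
    set l := S₀.toList
    set l' := List.ofFn (fun i => (t i, s i))
    set ψ : L.BoundedFormula Empty n := (conjList l ⊓ neqList l').not with hψ
    have hqf : ψ.IsQF := ((conjList_isQF l).inf (neqList_isQF l')).not
    have key : ∀ (M : Type _) [L.Structure M],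
        (M ⊨ ψ.alls ↔ ¬∃ x : Fin n → M, (∀ p ∈ S₀, p.1.realize x = p.2.realize x) ∧
          ∀ i, (t i).realize x ≠ (s i).realize x) := by
      intro M _
      simp only [Sentence.Realize, hψ, BoundedFormula.realize_alls,
        BoundedFormula.realize_not, BoundedFormula.realize_inf,
        realize_conjList, realize_neqList]
      constructor
      · rintro h ⟨x, hx1, hx2⟩
        exact h x ⟨fun p hp => hx1 p (by simpa [l] using hp), by
          intro p hp
          simp only [l', List.mem_ofFn] at hp
          obtain ⟨i, rfl⟩ := hp
          exact hx2 i⟩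
      · intro h x ⟨hx1, hx2⟩
        exact h ⟨x, fun p hp => hx1 p (by simpa [l] using hp), fun i =>
          hx2 (t i, s i) (by exact List.mem_ofFn.mpr ⟨i, rfl⟩)⟩
    have hC : ¬ (C ⊨ ψ.alls) := by
      rw [key C]
      exact not_not_intro (hfsC S₀ hS₀)
    have hB : ¬ ((B : Type _) ⊨ ψ.alls) := fun h => hC ((huniv n ψ hqf).mp h)
    rw [key (B : Type _)] at hB
    push_neg at hB
    simpa using hB
  · rintro ⟨x, hx1, hx2⟩
    apply hnrC
    refine ⟨fun i => (x i : C), ?_, ?_⟩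
    · intro p hp
      have := hx1 p hp
      have h1 : p.1.realize (fun i => (x i : C)) = B.subtype (p.1.realize x) := by
        exact HomClass.realize_term (M := (B : Type _)) (N := C) B.subtype (t := p.1) (v := x)
      have h2 : p.2.realize (fun i => (x i : C)) = B.subtype (p.2.realize x) := by
        exact HomClass.realize_term (M := (B : Type _)) (N := C) B.subtype (t := p.2) (v := x)
      rw [h1, h2, hx1 p hp]
    · intro i h
      apply hx2 i
      have h1 : (t i).realize (fun j => (x j : C)) = B.subtype ((t i).realize x) := by
        exact HomClass.realize_term (M := (B : Type _)) (N := C) B.subtype (t := t i) (v := x)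
      have h2 : (s i).realize (fun j => (x j : C)) = B.subtype ((s i).realize x) := by
        exact HomClass.realize_term (M := (B : Type _)) (N := C) B.subtype (t := s i) (v := x)
      rw [h1, h2] at h
      exact B.subtype.injective h
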